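/- arXiv:2506.11636 — 6 statements merged into one kernel-verified Lean document; each statement's English description precedes it below -/
import Mathlib

section
/- Let K be a number field with ring of integers O_K, let a, b, c ∈ O_K be nonzero, and let v be a maximal ideal of O_K not dividing 2O_K, with completion K_v of K at v, valuation ring O_{K_v}, and uniformizer π of O_{K_v}. Suppose the multiplicities of v satisfy v(a) = v(b) > 0 and v(c) = 0, and write v(a) = 2v' + v'' with v' ≥ 0 an integer and v'' ∈ {0,1}. Then a·x² + b·y² + c·z² = 0 has a solution (x,y,z) ∈ O_{K_v}³ with x, y, z not all zero if and only if (a/π^{v(a)})·x² + (b/π^{v(a)})·y² + c·π^{v''}·z² = 0 has a solution (x,y,z) ∈ O_{K_v}³ with x, y, z not all zero. -/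
open NumberField IsDedekindDomain

open IsDedekindDomain.HeightOneSpectrum in
private lemma stmt4_val {K : Type*} [Field K] [NumberField K]
    (v : HeightOneSpectrum (𝓞 K)) (r : 𝓞 K) (n : ℕ)
    (h1 : r ∈ v.asIdeal ^ n) (h2 : r ∉ v.asIdeal ^ (n + 1)) :
    Valued.v (algebraMap K (v.adicCompletion K) (r : K))
      = ((Multiplicative.ofAdd (-(n : ℤ)) : Multiplicative ℤ) : WithZero (Multiplicative ℤ)) := by
  have hcoe : algebraMap K (v.adicCompletion K) (r : K) = ((r : K) : v.adicCompletion K) := rfl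
  rw [hcoe, valuedAdicCompletion_eq_valuation', valuation_of_algebraMap, intValuation_apply]
  have hle : v.intValuationDef r ≤ Multiplicative.ofAdd (-(n : ℤ)) :=
    (v.intValuation_le_pow_iff_dvd r n).mpr (Ideal.dvd_span_singleton.mpr h1)
  have hlt : ¬ v.intValuationDef r ≤ Multiplicative.ofAdd (-((n + 1 : ℕ) : ℤ)) := fun h =>
    h2 (Ideal.dvd_span_singleton.mp ((v.intValuation_le_pow_iff_dvd r (n + 1)).mp h))
  rcases eq_or_ne (v.intValuationDef r) 0 with h0 | h0
  · exact absurd (by rw [h0]; exact zero_le') hlt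
  obtain ⟨m, hm⟩ := WithZero.ne_zero_iff_exists.mp h0
  rw [← hm] at hle hlt ⊢
  rw [WithZero.coe_le_coe] at hle hlt
  have h1 : Multiplicative.toAdd m ≤ -(n : ℤ) := Multiplicative.toAdd_le.mpr hle
  have h2 : ¬ Multiplicative.toAdd m ≤ -((n : ℤ) + 1) := by
    intro h
    exact hlt (Multiplicative.toAdd_le.mp (by simpa using h))
  rw [WithZero.coe_inj, ← ofAdd_toAdd m]
  exact congrArg _ (by omega)

/-- Case (3) of the lemma on non-coprime coefficients: if `v(a) = v(b) > 0` and `v(c) = 0`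
for an odd finite place `v`, writing `v(a) = 2v' + v''` with `v'' ∈ {0,1}`, solvability of
`a·x² + b·y² + c·z² = 0` over the `v`-adic integers is equivalent to that of
`(a/π^{v(a)})·x² + (b/π^{v(a)})·y² + c·π^{v''}·z² = 0`. -/
theorem stmt_4 (K : Type*) [Field K] [NumberField K] (a b c : 𝓞 K)
    (ha : a ≠ 0) (hb : b ≠ 0) (hc : c ≠ 0)
    (v : HeightOneSpectrum (𝓞 K))
    (hodd : ¬ v.asIdeal ∣ Ideal.span {(2 : 𝓞 K)})
    (na nb nc : ℕ)
    (hna : a ∈ v.asIdeal ^ na ∧ a ∉ v.asIdeal ^ (na + 1))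
    (hnb : b ∈ v.asIdeal ^ nb ∧ b ∉ v.asIdeal ^ (nb + 1))
    (hnc : c ∈ v.asIdeal ^ nc ∧ c ∉ v.asIdeal ^ (nc + 1))
    (hab : na = nb) (hapos : 0 < na) (hczero : nc = 0)
    (v' v'' : ℕ) (hv'' : v'' = 0 ∨ v'' = 1) (hsplit : na = 2 * v' + v'')
    (π : v.adicCompletionIntegers K)
    (hπ : Valued.v (π : v.adicCompletion K) =
      ((Multiplicative.ofAdd (-1 : ℤ) : Multiplicative ℤ) : WithZero (Multiplicative ℤ))) :
    (∃ x y z : v.adicCompletionIntegers K, ¬(x = 0 ∧ y = 0 ∧ z = 0) ∧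
        (algebraMap K (v.adicCompletion K) (a : K)) * (x : v.adicCompletion K) ^ 2 +
          (algebraMap K (v.adicCompletion K) (b : K)) * (y : v.adicCompletion K) ^ 2 +
          (algebraMap K (v.adicCompletion K) (c : K)) * (z : v.adicCompletion K) ^ 2 = 0) ↔
    (∃ x y z : v.adicCompletionIntegers K, ¬(x = 0 ∧ y = 0 ∧ z = 0) ∧
        (algebraMap K (v.adicCompletion K) (a : K) / (π : v.adicCompletion K) ^ na) *
            (x : v.adicCompletion K) ^ 2 +
          (algebraMap K (v.adicCompletion K) (b : K) / (π : v.adicCompletion K) ^ na) *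
            (y : v.adicCompletion K) ^ 2 +
          (algebraMap K (v.adicCompletion K) (c : K) * (π : v.adicCompletion K) ^ v'') *
            (z : v.adicCompletion K) ^ 2 = 0) := by
  set F := v.adicCompletion K
  set A := algebraMap K F (a : K) with hAdef
  set B := algebraMap K F (b : K) with hBdef
  set C := algebraMap K F (c : K) with hCdef
  have hA : Valued.v A = ((Multiplicative.ofAdd (-(na : ℤ)) : Multiplicative ℤ) :
      WithZero (Multiplicative ℤ)) := stmt4_val v a na hna.1 hna.2
  have hB : Valued.v B = ((Multiplicative.ofAdd (-(na : ℤ)) : Multiplicative ℤ) :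
      WithZero (Multiplicative ℤ)) := hab ▸ stmt4_val v b nb hnb.1 hnb.2
  have hC : Valued.v C = 1 := by
    have := stmt4_val v c nc hnc.1 hnc.2
    rw [hczero] at this; simpa using this
  have hπne : (π : F) ≠ 0 := by
    intro h
    rw [h, map_zero] at hπ
    exact (WithZero.coe_ne_zero (a := Multiplicative.ofAdd (-1 : ℤ))) hπ.symm
  have hπpow : ∀ k : ℕ, Valued.v ((π : F) ^ k) =
      ((Multiplicative.ofAdd (-(k : ℤ)) : Multiplicative ℤ) : WithZero (Multiplicative ℤ)) := by
    intro k
    rw [map_pow, hπ, ← WithZero.coe_pow]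
    congr 1
    rw [← ofAdd_nsmul]
    congr 1
    simp
  have hπpowne : ((π : F) ^ (v' + v'')) ≠ 0 := pow_ne_zero _ hπne
  have hπnane : ((π : F) ^ na) ≠ 0 := pow_ne_zero _ hπne
  -- the key algebraic identity
  have hpowid : (π : F) ^ na * (π : F) ^ v'' = ((π : F) ^ (v' + v'')) ^ 2 := by
    rw [← pow_add, ← pow_mul]
    congr 1
    omega
  have key : ∀ x y w : F,
      (π : F) ^ na * (A / (π : F) ^ na * x ^ 2 + B / (π : F) ^ na * y ^ 2
        + C * (π : F) ^ v'' * w ^ 2)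
      = A * x ^ 2 + B * y ^ 2 + C * ((π : F) ^ (v' + v'') * w) ^ 2 := by
    intro x y w
    have e1 : (π : F) ^ na * (A / (π : F) ^ na) = A := by field_simp
    have e2 : (π : F) ^ na * (B / (π : F) ^ na) = B := by field_simp
    linear_combination x ^ 2 * e1 + y ^ 2 * e2 + C * w ^ 2 * hpowid
  constructor
  · rintro ⟨x, y, z, hnt, heq⟩
    -- v(z) ≥ v' + v''
    have hwmem : ∃ w : v.adicCompletionIntegers K, (z : F) = (π : F) ^ (v' + v'') * (w : F) := by
      rcases eq_or_ne z 0 with hz | hz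
      · refine ⟨0, ?_⟩
        rw [hz]
        simp
      · have hzF : (z : F) ≠ 0 := fun h =>
          hz (Subtype.ext (by simp only [ZeroMemClass.coe_zero]; exact h))
        have hCz : C * (z : F) ^ 2 = -(A * (x : F) ^ 2 + B * (y : F) ^ 2) := by
          linear_combination heq
        have hx1 : Valued.v (x : F) ≤ 1 := x.2
        have hy1 : Valued.v (y : F) ≤ 1 := y.2
        have hbound : Valued.v (C * (z : F) ^ 2) ≤
            ((Multiplicative.ofAdd (-(na : ℤ)) : Multiplicative ℤ) :
              WithZero (Multiplicative ℤ)) := by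
          rw [hCz, Valuation.map_neg]
          refine le_trans (Valued.v.map_add _ _) (max_le ?_ ?_)
          · rw [map_mul, map_pow, hA]
            calc _ ≤ ((Multiplicative.ofAdd (-(na : ℤ)) : Multiplicative ℤ) :
                WithZero (Multiplicative ℤ)) * 1 := by
                  gcongr
                  exact pow_le_one' hx1 2
              _ = _ := mul_one _
          · rw [map_mul, map_pow, hB]
            calc _ ≤ ((Multiplicative.ofAdd (-(na : ℤ)) : Multiplicative ℤ) :
                WithZero (Multiplicative ℤ)) * 1 := by
                  gcongr
                  exact pow_le_one' hy1 2
              _ = _ := mul_one _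
        rw [map_mul, map_pow, hC, one_mul] at hbound
        have hzne : Valued.v (z : F) ≠ 0 := (Valuation.ne_zero_iff _).mpr hzF
        obtain ⟨m, hm⟩ := WithZero.ne_zero_iff_exists.mp hzne
        have hv2 : v'' ≤ 1 := by rcases hv'' with h | h <;> omega
        have hmle : Valued.v (z : F) ≤ Valued.v ((π : F) ^ (v' + v'')) := by
          rw [← hm, ← WithZero.coe_pow, WithZero.coe_le_coe] at hbound
          have h2 : 2 * Multiplicative.toAdd m ≤ -(na : ℤ) := by
            have := Multiplicative.toAdd_le.mpr hbound
            simpa [toAdd_pow] using this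
          rw [hπpow, ← hm, WithZero.coe_le_coe, ← ofAdd_toAdd m, Multiplicative.ofAdd_le]
          push_cast
          omega
        have hpos : (0 : WithZero (Multiplicative ℤ)) < Valued.v ((π : F) ^ (v' + v'')) := by
          rw [hπpow]
          exact WithZero.zero_lt_coe _
        refine ⟨⟨(z : F) / (π : F) ^ (v' + v''), ?_⟩, by field_simp⟩
        rw [HeightOneSpectrum.mem_adicCompletionIntegers, map_div₀, div_le_one₀ hpos]
        exact hmle
    obtain ⟨w, hw⟩ := hwmem
    refine ⟨x, y, w, ?_, ?_⟩
    · rintro ⟨hx0, hy0, hw0⟩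
      refine hnt ⟨hx0, hy0, Subtype.ext ?_⟩
      show (z : F) = ((0 : v.adicCompletionIntegers K) : F)
      rw [hw, hw0]
      simp
    · have := key (x : F) (y : F) (w : F)
      rw [← hw, heq] at this
      exact mul_left_cancel₀ hπnane (by rw [mul_zero]; exact this)
  · rintro ⟨x, y, w, hnt, heq⟩
    refine ⟨x, y, π ^ (v' + v'') * w, ?_, ?_⟩
    · rintro ⟨hx0, hy0, hz0⟩
      refine hnt ⟨hx0, hy0, ?_⟩
      have : ((π ^ (v' + v'') * w : v.adicCompletionIntegers K) : F) = 0 := by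
        rw [hz0]; simp
      push_cast at this
      rcases mul_eq_zero.mp this with h | h
      · exact absurd h hπpowne
      · exact Subtype.coe_injective (by simpa using h)
    · have := key (x : F) (y : F) (w : F)
      rw [heq, mul_zero] at this
      push_cast
      linear_combination -this
end

section
/- Let K be a number field with ring of integers O_K, let a, b, c ∈ O_K be nonzero, and let (α₀, β₀, γ₀) ∈ K³ be a solution of a·x² + b·y² + c·z² = 0 with γ₀ ≠ 0. Then every solution (x, y, z) ∈ K³ with z ≠ 0 is of the form x = ε₁·d·((b·m² − a·n²)·α₀ − 2·b·m·n·β₀), y = ε₂·d·(−2·a·m·n·α₀ + β₀·(a·n² − b·m²)), z = ε₃·d·γ₀·(a·n² + b·m²) for some m, n ∈ O_K, some nonzero d ∈ K, and some signs ε₁, ε₂, ε₃ ∈ {1, −1}. -/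
open NumberField

/-- Every solution `(x,y,z) ∈ K³` with `z ≠ 0` of `a·x² + b·y² + c·z² = 0` over a number
field `K` arises from the parametric formulae built from a fixed solution `(α₀, β₀, γ₀)`
with `γ₀ ≠ 0`. -/
theorem stmt_6 (K : Type*) [Field K] [NumberField K] (a b c : 𝓞 K)
    (ha : a ≠ 0) (hb : b ≠ 0) (hc : c ≠ 0) (α₀ β₀ γ₀ : K) (hγ₀ : γ₀ ≠ 0)
    (h₀ : (a : K) * α₀ ^ 2 + (b : K) * β₀ ^ 2 + (c : K) * γ₀ ^ 2 = 0)
    (x y z : K) (hz : z ≠ 0)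
    (hsol : (a : K) * x ^ 2 + (b : K) * y ^ 2 + (c : K) * z ^ 2 = 0) :
    ∃ (m n : 𝓞 K) (d : K) (ε₁ ε₂ ε₃ : K), d ≠ 0 ∧
      (ε₁ = 1 ∨ ε₁ = -1) ∧ (ε₂ = 1 ∨ ε₂ = -1) ∧ (ε₃ = 1 ∨ ε₃ = -1) ∧
      x = ε₁ * (d * (((b : K) * (m : K) ^ 2 - (a : K) * (n : K) ^ 2) * α₀ -
            2 * (b : K) * (m : K) * (n : K) * β₀)) ∧
      y = ε₂ * (d * (-(2 * (a : K) * (m : K) * (n : K) * α₀) +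
            β₀ * ((a : K) * (n : K) ^ 2 - (b : K) * (m : K) ^ 2))) ∧
      z = ε₃ * (d * γ₀ * ((a : K) * (n : K) ^ 2 + (b : K) * (m : K) ^ 2)) := by
  have haK : (a : K) ≠ 0 := RingOfIntegers.coe_ne_zero_iff.mpr ha
  have hbK : (b : K) ≠ 0 := RingOfIntegers.coe_ne_zero_iff.mpr hb
  have hcK : (c : K) ≠ 0 := RingOfIntegers.coe_ne_zero_iff.mpr hc
  by_cases hP : x * γ₀ - α₀ * z = 0
  · -- degenerate case: (x,y,z) proportional to (α₀, ±β₀, γ₀)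
    have hby : (b : K) * (y * γ₀ - β₀ * z) * (y * γ₀ + β₀ * z) = 0 := by
      linear_combination γ₀ ^ 2 * hsol - z ^ 2 * h₀ -
        ((a : K) * (x * γ₀ + α₀ * z)) * hP
    have hd : z / (γ₀ * (b : K)) ≠ 0 := by
      apply div_ne_zero hz (mul_ne_zero hγ₀ hbK)
    rcases mul_eq_zero.mp hby with h | h
    · rcases mul_eq_zero.mp h with h | h
      · exact absurd h hbK
      · -- y γ₀ = β₀ z : take ε₂ = -1
        refine ⟨1, 0, z / (γ₀ * (b : K)), 1, -1, 1, hd, Or.inl rfl, Or.inr rfl,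
          Or.inl rfl, ?_, ?_, ?_⟩
        · rw [div_mul_eq_mul_div, ← mul_div_assoc, eq_div_iff (mul_ne_zero hγ₀ hbK)]
          push_cast
          linear_combination (b : K) * hP
        · rw [div_mul_eq_mul_div, ← mul_div_assoc, eq_div_iff (mul_ne_zero hγ₀ hbK)]
          push_cast
          linear_combination (b : K) * h
        · push_cast
          field_simp
          ring
    · -- y γ₀ = -β₀ z : take ε₂ = 1
      refine ⟨1, 0, z / (γ₀ * (b : K)), 1, 1, 1, hd, Or.inl rfl, Or.inl rfl,
        Or.inl rfl, ?_, ?_, ?_⟩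
      · rw [div_mul_eq_mul_div, ← mul_div_assoc, eq_div_iff (mul_ne_zero hγ₀ hbK)]
        push_cast
        linear_combination (b : K) * hP
      · rw [div_mul_eq_mul_div, ← mul_div_assoc, eq_div_iff (mul_ne_zero hγ₀ hbK)]
        push_cast
        linear_combination (b : K) * h
      · push_cast
        field_simp
        ring
  · -- main case
    obtain ⟨⟨m, n⟩, hmn⟩ :=
      IsLocalization.surj (nonZeroDivisors (𝓞 K)) ((y * γ₀ - β₀ * z) / (x * γ₀ - α₀ * z))
    have hnK : ((n : 𝓞 K) : K) ≠ 0 :=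
      RingOfIntegers.coe_ne_zero_iff.mpr (nonZeroDivisors.coe_ne_zero n)
    set mK : K := ((m : 𝓞 K) : K) with hmK
    set nK : K := ((n : 𝓞 K) : K) with hnKdef
    have h3 : mK * (x * γ₀ - α₀ * z) = nK * (y * γ₀ - β₀ * z) := by
      have : (y * γ₀ - β₀ * z) / (x * γ₀ - α₀ * z) * nK = mK := hmn
      rw [div_mul_eq_mul_div, div_eq_iff hP] at this
      linear_combination -this
    have hR : (a : K) * nK * (x * γ₀ + α₀ * z) + (b : K) * mK * (y * γ₀ + β₀ * z) = 0 := by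
      have hPR : (x * γ₀ - α₀ * z) *
          ((a : K) * nK * (x * γ₀ + α₀ * z) + (b : K) * mK * (y * γ₀ + β₀ * z)) = 0 := by
        linear_combination nK * γ₀ ^ 2 * hsol - nK * z ^ 2 * h₀ +
          ((b : K) * (y * γ₀ + β₀ * z)) * h3
      exact (mul_eq_zero.mp hPR).resolve_left hP
    have he : (a : K) * nK ^ 2 + (b : K) * mK ^ 2 ≠ 0 := by
      intro h4
      have hmne : mK ≠ 0 := by
        intro hm0
        have h5 : (a : K) * nK ^ 2 = 0 := by
          rw [hm0] at h4
          linear_combination h4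
        rcases mul_eq_zero.mp h5 with h | h
        · exact absurd h haK
        · exact absurd (pow_eq_zero_iff (by norm_num) |>.mp h) hnK
      have hS : (a : K) * α₀ * nK + (b : K) * β₀ * mK = 0 := by
        have h2 : 2 * mK * z * ((a : K) * α₀ * nK + (b : K) * β₀ * mK) = 0 := by
          linear_combination mK * hR - (a : K) * nK * h3 - (y * γ₀ - β₀ * z) * h4
        have := mul_eq_zero.mp h2
        rcases this with h | h
        · rcases mul_eq_zero.mp h with h | h
          · rcases mul_eq_zero.mp h with h | h
            · norm_num at h
            · exact absurd h hmne
          · exact absurd h hz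
        · exact h
      have hAB : mK * α₀ - nK * β₀ = 0 := by
        have : (b : K) * mK * (mK * α₀ - nK * β₀) = 0 := by
          linear_combination -nK * hS + α₀ * h4
        rcases mul_eq_zero.mp this with h | h
        · rcases mul_eq_zero.mp h with h | h
          exacts [absurd h hbK, absurd h hmne]
        · exact h
      have hc0 : (c : K) * (γ₀ * nK) ^ 2 = 0 := by
        linear_combination nK ^ 2 * h₀ - α₀ ^ 2 * h4 + (b : K) * (mK * α₀ + nK * β₀) * hAB
      rcases mul_eq_zero.mp hc0 with h | h
      · exact absurd h hcK
      · exact absurd (pow_eq_zero_iff (by norm_num) |>.mp h) (mul_ne_zero hγ₀ hnK)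
    have hge : γ₀ * ((a : K) * nK ^ 2 + (b : K) * mK ^ 2) ≠ 0 := mul_ne_zero hγ₀ he
    refine ⟨m, n, z / (γ₀ * ((a : K) * nK ^ 2 + (b : K) * mK ^ 2)), 1, 1, 1,
      div_ne_zero hz hge, Or.inl rfl, Or.inl rfl, Or.inl rfl, ?_, ?_, ?_⟩
    · rw [one_mul]
      rw [div_mul_eq_mul_div, eq_div_iff hge]
      linear_combination nK * hR + (b : K) * mK * h3
    · rw [one_mul]
      rw [div_mul_eq_mul_div, eq_div_iff hge]
      linear_combination mK * hR - (a : K) * nK * h3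
    · rw [one_mul, ← hmK, ← hnKdef]
      field_simp
end

section
/- Let K be a number field with ring of integers O_K, let a, b, c ∈ O_K be nonzero, and suppose a·x² + b·y² + c·z² = 0 has a solution (α₀, β₀, γ₀) ∈ K³ with γ₀ ≠ 0. Then the set of solutions (x, y, z) ∈ K³ of a·x² + b·y² + c·z² = 0 with z ≠ 0 is infinite. -/
open NumberField

/-- If `a·x² + b·y² + c·z² = 0` has a solution over a number field `K` with `z ≠ 0`, then
it has infinitely many solutions with `z ≠ 0`. -/
theorem stmt_7 (K : Type*) [Field K] [NumberField K] (a b c : 𝓞 K)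
    (ha : a ≠ 0) (hb : b ≠ 0) (hc : c ≠ 0) (α₀ β₀ γ₀ : K) (hγ₀ : γ₀ ≠ 0)
    (h₀ : (a : K) * α₀ ^ 2 + (b : K) * β₀ ^ 2 + (c : K) * γ₀ ^ 2 = 0) :
    {p : K × K × K |
      (a : K) * p.1 ^ 2 + (b : K) * p.2.1 ^ 2 + (c : K) * p.2.2 ^ 2 = 0 ∧
        p.2.2 ≠ 0}.Infinite := by
  have hinf : ({0}ᶜ : Set K).Infinite := (Set.finite_singleton 0).infinite_compl
  have key : (fun t : K => (t * α₀, t * β₀, t * γ₀)) '' ({0}ᶜ : Set K) ⊆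
      {p : K × K × K |
        (a : K) * p.1 ^ 2 + (b : K) * p.2.1 ^ 2 + (c : K) * p.2.2 ^ 2 = 0 ∧ p.2.2 ≠ 0} := by
    rintro p ⟨t, ht, rfl⟩
    simp only [Set.mem_compl_iff, Set.mem_singleton_iff] at ht
    refine ⟨?_, mul_ne_zero ht hγ₀⟩
    have : (a : K) * (t * α₀) ^ 2 + (b : K) * (t * β₀) ^ 2 + (c : K) * (t * γ₀) ^ 2
        = t ^ 2 * ((a : K) * α₀ ^ 2 + (b : K) * β₀ ^ 2 + (c : K) * γ₀ ^ 2) := by ring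
    simp [this, h₀]
  refine Set.Infinite.mono key (hinf.image ?_)
  intro t _ s _ h
  exact mul_right_cancel₀ hγ₀ (congrArg (fun p : K × K × K => p.2.2) h)
end

section
/- Let d ∈ {1, 2}, let K = ℚ(√−d) be the imaginary quadratic field generated by a square root of −d, with ring of integers O_K, and let |·| denote the complex absolute value under an embedding of K into ℂ. Let a, b, c ∈ O_K and suppose a·x² + b·y² + c·z² = 0 has a solution (α, β, γ) ∈ O_K³ with α, β, γ not all zero. Then it has a solution (α₀, β₀, γ₀) ∈ O_K³ with α₀, β₀, γ₀ not all zero and |γ₀| ≤ √( (4/(3−d))·|a·b| ). -/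
open NumberField Polynomial

namespace Holzer9

variable {K : Type*} [Field K] [NumberField K]

section Coords
variable {d : ℕ} {θ : K}

lemma theta_irrat (hd : 0 < d) (hθ : θ ^ 2 = -(d : K)) (q : ℚ) : θ ≠ (q : K) := by
  intro h
  have h2 : ((q ^ 2 + (d:ℚ) : ℚ) : K) = 0 := by
    push_cast
    rw [← h, hθ]; ring
  have h3 : (q ^ 2 + (d:ℚ)) = 0 := by exact_mod_cast h2
  have h4 : (0:ℚ) < q ^ 2 + (d:ℚ) := by positivity
  linarith

lemma coords (hd : 0 < d) (hθ : θ ^ 2 = -(d : K))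
    (hgen : IntermediateField.adjoin ℚ {θ} = ⊤) (x : K) :
    ∃ r s : ℚ, x = (r : K) + (s : K) * θ := by
  classical
  set S : Subfield K :=
    { carrier := {x : K | ∃ r s : ℚ, x = (r : K) + (s : K) * θ}
      zero_mem' := ⟨0, 0, by push_cast; ring⟩
      one_mem' := ⟨1, 0, by push_cast; ring⟩
      add_mem' := by
        rintro x y ⟨r, s, rfl⟩ ⟨r', s', rfl⟩
        exact ⟨r + r', s + s', by push_cast; ring⟩
      neg_mem' := by
        rintro x ⟨r, s, rfl⟩
        exact ⟨-r, -s, by push_cast; ring⟩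
      mul_mem' := by
        rintro x y ⟨r, s, rfl⟩ ⟨r', s', rfl⟩
        refine ⟨r * r' - (d:ℚ) * s * s', r * s' + s * r', ?_⟩
        push_cast
        linear_combination (s:K) * (s':K) * hθ
      inv_mem' := by
        intro x hx
        obtain ⟨r, s, rfl⟩ := hx
        by_cases h0 : (r : K) + (s : K) * θ = 0
        · rw [h0]; simp only [inv_zero]
          exact ⟨0, 0, by push_cast; ring⟩
        · have hD : r ^ 2 + (d:ℚ) * s ^ 2 ≠ 0 := by
            intro hD0
            have hdQ : (0:ℚ) < (d:ℚ) := by exact_mod_cast hd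
            have hs2 : s ^ 2 = 0 := by nlinarith [sq_nonneg r, sq_nonneg s]
            have hr2 : r ^ 2 = 0 := by nlinarith [sq_nonneg r, sq_nonneg s]
            have hs0 : s = 0 := by exact pow_eq_zero_iff (n := 2) (by norm_num) |>.mp hs2
            have hr0 : r = 0 := by exact pow_eq_zero_iff (n := 2) (by norm_num) |>.mp hr2
            exact h0 (by rw [hr0, hs0]; push_cast; ring)
          refine ⟨r / (r ^ 2 + (d:ℚ) * s ^ 2), -s / (r ^ 2 + (d:ℚ) * s ^ 2), ?_⟩
          apply inv_eq_of_mul_eq_one_right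
          have hDK : ((r ^ 2 + (d:ℚ) * s ^ 2 : ℚ) : K) ≠ 0 := by exact_mod_cast hD
          push_cast at hDK ⊢
          linear_combination (-(s:K)^2 * ((r:K)^2 + (d:K)*(s:K)^2)⁻¹) * hθ + mul_inv_cancel₀ hDK }
  have hθS : θ ∈ S := ⟨0, 1, by push_cast; ring⟩
  have halg : ∀ q : ℚ, algebraMap ℚ K q ∈ S := fun q => ⟨q, 0, by
    rw [eq_ratCast (algebraMap ℚ K) q]; push_cast; ring⟩
  set S' : IntermediateField ℚ K := Subfield.toIntermediateField S halg
  have hle : IntermediateField.adjoin ℚ {θ} ≤ S' :=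
    IntermediateField.adjoin_le_iff.mpr (by intro t ht; rw [Set.mem_singleton_iff] at ht; subst ht; exact hθS)
  rw [hgen] at hle
  exact hle (IntermediateField.mem_top)

lemma ftheta (hd : 0 < d) (hθ : θ ^ 2 = -(d : K)) (f : K →+* ℂ) :
    (f θ).re = 0 ∧ (f θ).im ^ 2 = (d : ℝ) := by
  have h : (f θ) ^ 2 = -(d : ℂ) := by
    rw [← map_pow, hθ, map_neg, map_natCast]
  have hre := congrArg Complex.re h
  have him := congrArg Complex.im h
  rw [sq, Complex.mul_re] at hre
  rw [sq, Complex.mul_im] at him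
  simp only [Complex.neg_re, Complex.natCast_re, Complex.neg_im, Complex.natCast_im, neg_zero] at hre him
  have hdR : (0:ℝ) < (d:ℝ) := by exact_mod_cast hd
  by_cases h0 : (f θ).im = 0
  · exfalso; rw [h0] at hre; nlinarith [sq_nonneg ((f θ).re)]
  · have h2 : (f θ).re * (f θ).im = 0 := by linarith
    have hre0 : (f θ).re = 0 := by
      rcases mul_eq_zero.mp h2 with h | h
      · exact h
      · exact absurd h h0
    refine ⟨hre0, ?_⟩
    rw [hre0] at hre
    nlinarith

lemma normSq_coords (hd : 0 < d) (hθ : θ ^ 2 = -(d : K)) (f : K →+* ℂ) (r s : ℚ) :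
    Complex.normSq (f ((r : K) + (s : K) * θ)) = (r:ℝ) ^ 2 + (d:ℝ) * (s:ℝ) ^ 2 := by
  obtain ⟨hre, him⟩ := ftheta hd hθ f
  have hf : f ((r : K) + (s : K) * θ) = (r : ℂ) + (s : ℂ) * f θ := by
    rw [map_add, map_mul, map_ratCast, map_ratCast]
  rw [hf, Complex.normSq_apply]
  simp only [Complex.add_re, Complex.add_im, Complex.mul_re, Complex.mul_im,
    Complex.ratCast_re, Complex.ratCast_im, hre]
  ring_nf
  nlinarith [him]

lemma int_coords (hd : 0 < d) (hθ : θ ^ 2 = -(d : K)) (x : K) (hx : IsIntegral ℤ x) (r s : ℚ)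
    (hxe : x = (r : K) + (s : K) * θ) :
    (∃ m : ℤ, (m : ℚ) = 2 * r) ∧ (∃ k : ℤ, (k : ℚ) = r ^ 2 + (d:ℚ) * s ^ 2) := by
  by_cases hs : s = 0
  · subst hs
    have hxr : x = algebraMap ℚ K r := by
      rw [hxe, eq_ratCast (algebraMap ℚ K) r]; push_cast; ring
    have hint : IsIntegral ℤ r := by
      have hinj : Function.Injective (algebraMap ℚ K) := (algebraMap ℚ K).injective
      exact (isIntegral_algebraMap_iff hinj).mp (hxr ▸ hx)
    obtain ⟨m₀, hm₀⟩ := IsIntegrallyClosed.isIntegral_iff.mp hint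
    rw [eq_intCast] at hm₀
    refine ⟨⟨2 * m₀, by push_cast [hm₀]; ring⟩, ⟨m₀ ^ 2, by push_cast [hm₀]; ring⟩⟩
  · set q1 : ℚ[X] := C (-(2 * r)) * X + C (r ^ 2 + (d:ℚ) * s ^ 2) with hq1def
    set P : ℚ[X] := X ^ 2 + q1 with hPdef
    have hq1deg : q1.degree ≤ 1 := by
      rw [hq1def]
      exact degree_linear_le
    have hq1lt : q1.degree < 2 := lt_of_le_of_lt hq1deg (by norm_num)
    have hPmonic : P.Monic := by
      have := monic_X_pow_add (n := 2) (p := q1) hq1lt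
      simpa using this
    have haev : aeval x P = 0 := by
      rw [hPdef, hq1def, hxe]
      simp only [map_add, map_sub, map_pow, map_mul, aeval_X, aeval_C, map_neg]
      simp only [eq_ratCast (algebraMap ℚ K)]
      push_cast
      linear_combination (s:K) ^ 2 * hθ
    have hxQint : IsIntegral ℚ x := hx.tower_top
    have hnotrange : x ∉ (algebraMap ℚ K).range := by
      rintro ⟨q, hq⟩
      apply theta_irrat hd hθ ((q - r) / s)
      rw [eq_ratCast (algebraMap ℚ K)] at hq
      have hsK : ((s:ℚ) : K) ≠ 0 := by exact_mod_cast hs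
      push_cast
      rw [eq_div_iff hsK]
      linear_combination -hq - hxe
    have hdeg2 : 2 ≤ (minpoly ℚ x).natDegree := (minpoly.two_le_natDegree_iff hxQint).mpr hnotrange
    have hdvd : minpoly ℚ x ∣ P := minpoly.dvd ℚ x haev
    obtain ⟨Q, hQ⟩ := hdvd
    have hPdeg : P.natDegree = 2 := by
      have hdeg : P.degree = 2 := by
        rw [hPdef]
        rw [degree_add_eq_left_of_degree_lt]
        · exact degree_X_pow 2
        · rw [degree_X_pow]
          exact lt_of_le_of_lt hq1deg (by norm_num)
      exact natDegree_eq_of_degree_eq_some hdeg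
    have hP0 : P ≠ 0 := hPmonic.ne_zero
    have hmp0 : minpoly ℚ x ≠ 0 := minpoly.ne_zero hxQint
    have hQ0 : Q ≠ 0 := by rintro rfl; rw [mul_zero] at hQ; exact hP0 hQ
    have hdegs : (minpoly ℚ x).natDegree + Q.natDegree = 2 := by
      rw [← hPdeg, hQ, natDegree_mul hmp0 hQ0]
    have hQdeg : Q.natDegree = 0 := by omega
    have hQC : Q = C (Q.coeff 0) := eq_C_of_natDegree_eq_zero hQdeg
    have hQlc : Q.coeff 0 = 1 := by
      have := congrArg leadingCoeff hQ
      rw [leadingCoeff_mul, hPmonic.leadingCoeff, (minpoly.monic hxQint).leadingCoeff, one_mul] at this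
      rw [leadingCoeff, hQdeg] at this
      exact this.symm
    have hPeq : P = minpoly ℚ x := by rw [hQ, hQC, hQlc, map_one, mul_one]
    have hmap : minpoly ℚ x = map (algebraMap ℤ ℚ) (minpoly ℤ x) :=
      minpoly.isIntegrallyClosed_eq_field_fractions' ℚ hx
    constructor
    · refine ⟨-((minpoly ℤ x).coeff 1), ?_⟩
      have h1 : P.coeff 1 = -(2 * r) := by
        rw [hPdef, hq1def]
        simp only [coeff_add, coeff_C_mul, coeff_X_pow, coeff_X_one, coeff_C]
        norm_num
      have h2 : P.coeff 1 = algebraMap ℤ ℚ ((minpoly ℤ x).coeff 1) := by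
        rw [hPeq, hmap, coeff_map]
      rw [eq_intCast] at h2
      push_cast
      rw [← h2, h1]
      ring
    · refine ⟨(minpoly ℤ x).coeff 0, ?_⟩
      have h1 : P.coeff 0 = r ^ 2 + (d:ℚ) * s ^ 2 := by
        rw [hPdef, hq1def]
        simp only [coeff_add, coeff_C_mul, coeff_X_pow, coeff_X_zero, coeff_C]
        norm_num
      have h2 : P.coeff 0 = algebraMap ℤ ℚ ((minpoly ℤ x).coeff 0) := by
        rw [hPeq, hmap, coeff_map]
      rw [eq_intCast] at h2
      rw [← h2, h1]

end Coords

section Meas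

variable {d : ℕ} {θ : K} {f : K →+* ℂ}

/-- The element `θ` as an algebraic integer. -/
noncomputable def thetaO (hθ : θ ^ 2 = -(d : K)) : 𝓞 K :=
  ⟨θ, ⟨Polynomial.X ^ 2 + Polynomial.C (d : ℤ), by
      apply Polynomial.monic_X_pow_add (n := 2)
      exact lt_of_le_of_lt Polynomial.degree_C_le (by norm_num), by
      simp only [Polynomial.eval₂_add, Polynomial.eval₂_pow, Polynomial.eval₂_X, Polynomial.eval₂_C]
      rw [hθ]
      push_cast
      ring⟩⟩

@[simp] lemma thetaO_coe (hθ : θ ^ 2 = -(d : K)) : ((thetaO hθ : 𝓞 K) : K) = θ := rfl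

/-- Natural number measure: the norm of an algebraic integer. -/
noncomputable def meas (f : K →+* ℂ) (v : 𝓞 K) : ℕ := ⌊Complex.normSq (f (v : K))⌋₊

lemma meas_spec (hd : 0 < d) (hθ : θ ^ 2 = -(d : K))
    (hgen : IntermediateField.adjoin ℚ {θ} = ⊤) (v : 𝓞 K) :
    (meas f v : ℝ) = Complex.normSq (f (v : K)) := by
  obtain ⟨r, s, hrs⟩ := coords hd hθ hgen ((v : K))
  have hint : IsIntegral ℤ ((v : K)) := RingOfIntegers.isIntegral_coe v
  obtain ⟨-, k, hk⟩ := int_coords hd hθ _ hint r s hrs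
  have hns : Complex.normSq (f (v : K)) = ((r ^ 2 + (d:ℚ) * s ^ 2 : ℚ) : ℝ) := by
    rw [hrs, normSq_coords hd hθ]
    push_cast
    ring
  have hkr : Complex.normSq (f (v : K)) = ((k : ℤ) : ℝ) := by
    rw [hns, ← hk]
    push_cast
    ring
  have hk0 : 0 ≤ k := by
    have := Complex.normSq_nonneg (f (v : K))
    rw [hkr] at this
    exact_mod_cast this
  have hmeq : meas f v = k.toNat := by
    unfold meas
    rw [hkr, (by exact_mod_cast (Int.toNat_of_nonneg hk0).symm : ((k:ℤ):ℝ) = ((k.toNat:ℕ):ℝ))]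
    exact Nat.floor_natCast _
  rw [hmeq, hkr]
  exact_mod_cast congrArg (fun t : ℤ => (t : ℝ)) (Int.toNat_of_nonneg hk0)

lemma meas_zero_iff (hd : 0 < d) (hθ : θ ^ 2 = -(d : K))
    (hgen : IntermediateField.adjoin ℚ {θ} = ⊤) (v : 𝓞 K) :
    meas f v = 0 ↔ v = 0 := by
  constructor
  · intro h
    have h2 : Complex.normSq (f (v : K)) = 0 := by
      rw [← meas_spec hd hθ hgen v, h]; norm_num
    have h3 : f (v : K) = 0 := Complex.normSq_eq_zero.mp h2
    have h4 : (v : K) = 0 := f.injective (by rw [h3, map_zero])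
    exact_mod_cast h4
  · rintro rfl
    unfold meas
    norm_num

lemma meas_mul (hd : 0 < d) (hθ : θ ^ 2 = -(d : K))
    (hgen : IntermediateField.adjoin ℚ {θ} = ⊤) (u v : 𝓞 K) :
    meas f (u * v) = meas f u * meas f v := by
  have : ((meas f (u * v) : ℕ) : ℝ) = ((meas f u * meas f v : ℕ) : ℝ) := by
    push_cast
    rw [meas_spec hd hθ hgen, meas_spec hd hθ hgen, meas_spec hd hθ hgen]
    push_cast
    rw [map_mul]
    exact Complex.normSq_mul _ _
  exact_mod_cast this

lemma round_lemma (hd : 0 < d) (hθ : θ ^ 2 = -(d : K)) (f : K →+* ℂ) (ζ : ℂ) :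
    ∃ v : 𝓞 K, Complex.normSq (ζ - f (v : K)) ≤ (1 + (d:ℝ)) / 4 := by
  obtain ⟨hre, him⟩ := ftheta hd hθ f
  set Y := (f θ).im with hY
  have hY0 : Y ≠ 0 := by
    intro h0
    rw [h0] at him
    have : (0:ℝ) < (d:ℝ) := by exact_mod_cast hd
    simpa [← him] using this
  set m : ℤ := round ζ.re
  set n : ℤ := round (ζ.im / Y)
  refine ⟨(m : 𝓞 K) + (n : 𝓞 K) * thetaO hθ, ?_⟩
  have hm' : ((m : 𝓞 K) : K) = (m : K) := map_intCast (algebraMap (𝓞 K) K) m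
  have hn' : ((n : 𝓞 K) : K) = (n : K) := map_intCast (algebraMap (𝓞 K) K) n
  have hcoe : (((m : 𝓞 K) + (n : 𝓞 K) * thetaO hθ : 𝓞 K) : K) = (m : K) + (n : K) * θ := by
    push_cast [hm', hn']
    rfl
  rw [hcoe]
  have hf : f ((m : K) + (n : K) * θ) = (m : ℂ) + (n : ℂ) * f θ := by
    rw [map_add, map_mul, map_intCast, map_intCast]
  rw [hf, Complex.normSq_apply]
  have hre2 : (ζ - ((m:ℂ) + (n:ℂ) * f θ)).re = ζ.re - m := by
    simp [Complex.sub_re, Complex.add_re, Complex.mul_re, hre]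
  have him2 : (ζ - ((m:ℂ) + (n:ℂ) * f θ)).im = ζ.im - n * Y := by
    simp [Complex.sub_im, Complex.add_im, Complex.mul_im, hre, hY]
    try ring
  rw [hre2, him2]
  have h1 : |ζ.re - (m:ℝ)| ≤ 1 / 2 := abs_sub_round ζ.re
  have h2 : |ζ.im / Y - (n:ℝ)| ≤ 1 / 2 := abs_sub_round (ζ.im / Y)
  have h1' : (ζ.re - m) * (ζ.re - m) ≤ 1 / 4 := by nlinarith [abs_nonneg (ζ.re - (m:ℝ)), sq_abs (ζ.re - (m:ℝ))]
  have h2' : (ζ.im - n * Y) * (ζ.im - n * Y) ≤ (d:ℝ) / 4 := by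
    have hkey : ζ.im - n * Y = Y * (ζ.im / Y - n) := by field_simp
    rw [hkey]
    have : (ζ.im / Y - n) * (ζ.im / Y - n) ≤ 1 / 4 := by
      nlinarith [abs_nonneg (ζ.im / Y - (n:ℝ)), sq_abs (ζ.im / Y - (n:ℝ))]
    have hYsq : Y * Y = (d:ℝ) := by nlinarith [him]
    nlinarith [sq_nonneg (ζ.im / Y - (n:ℝ)), (by exact_mod_cast hd : (0:ℝ) < (d:ℝ))]
  linarith

lemma bezout_aux (hd : 0 < d) (hd2 : d ≤ 2) (hθ : θ ^ 2 = -(d : K))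
    (hgen : IntermediateField.adjoin ℚ {θ} = ⊤) :
    ∀ n : ℕ, ∀ x y : 𝓞 K, meas f y ≤ n →
      ∃ g p q : 𝓞 K, p * x + q * y = g ∧ g ∣ x ∧ g ∣ y := by
  intro n
  induction n with
  | zero =>
      intro x y hy
      have hy0 : y = 0 := (meas_zero_iff hd hθ hgen y).mp (Nat.le_zero.mp hy)
      exact ⟨x, 1, 0, by ring, dvd_refl x, hy0 ▸ dvd_zero x⟩
  | succ n ih =>
      intro x y hy
      by_cases hy0 : y = 0
      · exact ⟨x, 1, 0, by ring, dvd_refl x, hy0 ▸ dvd_zero x⟩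
      · have hyK : (y:K) ≠ 0 := fun h => hy0 (by exact_mod_cast h)
        have hfy : f (y:K) ≠ 0 := fun h => hyK (f.injective (by rw [h, map_zero]))
        obtain ⟨v, hv⟩ := round_lemma hd hθ f (f (x:K) / f (y:K))
        set r := x - v * y with hr
        have hmr : (meas f r : ℝ) < meas f y := by
          rw [meas_spec hd hθ hgen, meas_spec hd hθ hgen]
          have hcoe : ((r : 𝓞 K) : K) = (x:K) - (v:K)*(y:K) := by rw [hr]; push_cast; ring
          have hfr : f (r:K) = f (y:K) * (f (x:K)/f (y:K) - f (v:K)) := by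
            rw [hcoe, map_sub, map_mul]
            field_simp
          rw [hfr, Complex.normSq_mul]
          have h3 : (1+(d:ℝ))/4 < 1 := by
            have : (d:ℝ) ≤ 2 := by exact_mod_cast hd2
            linarith
          have h4 : 0 < Complex.normSq (f (y:K)) := Complex.normSq_pos.mpr hfy
          nlinarith [Complex.normSq_nonneg (f (x:K)/f (y:K) - f (v:K)), hv]
        have hmrn : meas f r ≤ n := by
          have : meas f r < meas f y := by exact_mod_cast hmr
          omega
        obtain ⟨g, p, q, hpq, hgy, hgr⟩ := ih y r hmrn
        refine ⟨g, q, p - q*v, ?_, ?_, hgy⟩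
        · rw [← hpq, hr]; ring
        · have hx : x = r + v*y := by rw [hr]; ring
          rw [hx]; exact dvd_add hgr (Dvd.dvd.mul_left hgy v)

lemma bezout (f : K →+* ℂ) (hd : 0 < d) (hd2 : d ≤ 2) (hθ : θ ^ 2 = -(d : K))
    (hgen : IntermediateField.adjoin ℚ {θ} = ⊤) (x y : 𝓞 K) :
    ∃ g p q : 𝓞 K, p * x + q * y = g ∧ g ∣ x ∧ g ∣ y :=
  bezout_aux (f := f) hd hd2 hθ hgen (meas f y) x y le_rfl

lemma unit_of_meas_one (hd : 0 < d) (hθ : θ ^ 2 = -(d : K))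
    (hgen : IntermediateField.adjoin ℚ {θ} = ⊤) (g : 𝓞 K) (hg : meas f g = 1) :
    ∃ g' : 𝓞 K, g * g' = 1 := by
  obtain ⟨r, s, hrs⟩ := coords hd hθ hgen ((g : K))
  have hint := RingOfIntegers.isIntegral_coe g
  obtain ⟨⟨m, hm⟩, ⟨k, hk⟩⟩ := int_coords hd hθ _ hint r s hrs
  have h1R : ((r^2 + (d:ℚ)*s^2 : ℚ) : ℝ) = 1 := by
    have hms := meas_spec (f := f) hd hθ hgen g
    rw [hg] at hms
    rw [hrs, normSq_coords hd hθ] at hms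
    push_cast at hms ⊢
    linarith
  have h1 : r^2 + (d:ℚ)*s^2 = 1 := by exact_mod_cast h1R
  have h1K : (r:K)^2 + (d:K)*(s:K)^2 = 1 := by exact_mod_cast h1
  have hmK : ((m:ℤ):K) = 2*(r:K) := by exact_mod_cast hm
  set y : K := (r:K) - (s:K)*θ with hy
  have hyint : IsIntegral ℤ y := by
    have h2 : y = algebraMap ℤ K m - (g : K) := by
      rw [eq_intCast (algebraMap ℤ K) m, hy, hrs, hmK]
      ring
    rw [h2]
    exact (isIntegral_algebraMap).sub hint
  refine ⟨⟨y, hyint⟩, ?_⟩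
  have : ((g * ⟨y, hyint⟩ : 𝓞 K) : K) = ((1 : 𝓞 K) : K) := by
    push_cast
    show (g:K) * y = 1
    rw [hrs, hy]
    linear_combination (-(s:K)^2) * hθ + h1K
  exact RingOfIntegers.coe_injective this

end Meas

section Gauss

variable {d : ℕ} {θ : K} {f : K →+* ℂ}

open Complex in
lemma lagrange (A B : ℝ) (t1 u1 t2 u2 ζ : ℂ)
    (hH : A * normSq t1 + B * normSq u1 ≠ 0) :
    A * normSq (t2 - ζ * t1) + B * normSq (u2 - ζ * u1) =
      (A * normSq t1 + B * normSq u1) *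
        normSq (ζ - (A * (t2 * (starRingEnd ℂ) t1) + B * (u2 * (starRingEnd ℂ) u1)) /
          ((A * normSq t1 + B * normSq u1 : ℝ) : ℂ))
      + A * B * normSq (t1 * u2 - t2 * u1) / (A * normSq t1 + B * normSq u1) := by
  have hH' : ((A * normSq t1 + B * normSq u1 : ℝ) : ℂ) ≠ 0 := by exact_mod_cast hH
  apply Complex.ofReal_injective
  push_cast
  rw [← Complex.mul_conj, ← Complex.mul_conj, ← Complex.mul_conj, ← Complex.mul_conj,
    ← Complex.mul_conj, ← Complex.mul_conj]
  simp only [map_sub, map_mul, map_add, map_div₀, Complex.conj_conj, Complex.conj_ofReal,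
    Complex.ofReal_add, Complex.ofReal_mul]
  have hden1 : (↑A * (t1 * (starRingEnd ℂ) t1) + ↑B * (u1 * (starRingEnd ℂ) u1) : ℂ) ≠ 0 := by
    rw [Complex.mul_conj, Complex.mul_conj]
    exact_mod_cast hH
  have hden2 : (↑A * ((starRingEnd ℂ) t1 * t1) + ↑B * ((starRingEnd ℂ) u1 * u1) : ℂ) ≠ 0 := by
    rw [mul_comm ((starRingEnd ℂ) t1) t1, mul_comm ((starRingEnd ℂ) u1) u1]
    exact hden1
  rw [mul_comm ((starRingEnd ℂ) t1) t1, mul_comm ((starRingEnd ℂ) u1) u1]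
  obtain ⟨D, hD⟩ : ∃ D, D = (↑A * (t1 * (starRingEnd ℂ) t1) + ↑B * (u1 * (starRingEnd ℂ) u1) : ℂ) := ⟨_, rfl⟩
  rw [← hD]
  rw [← hD] at hden1
  field_simp
  rw [hD]
  ring

/-- counting measure for termination of Gauss reduction -/
noncomputable def cnt (A B : ℝ) (h : ℝ) : ℕ :=
  (((Finset.range (⌊h/A⌋₊+1)) ×ˢ (Finset.range (⌊h/B⌋₊+1))).filter
    (fun p => A*p.1 + B*p.2 < h)).card

lemma cnt_lt (A B : ℝ) (hA : 0 < A) (hB : 0 < B) (j k : ℕ) (h : ℝ)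
    (hlt : A*j + B*k < h) : cnt A B (A*j+B*k) < cnt A B h := by
  have h0 : (0:ℝ) ≤ A*j + B*k := by positivity
  have hh0 : (0:ℝ) < h := lt_of_le_of_lt h0 hlt
  apply Finset.card_lt_card
  rw [Finset.ssubset_iff_of_subset]
  · refine ⟨(j, k), ?_, ?_⟩
    · rw [Finset.mem_filter]
      constructor
      · rw [Finset.mem_product, Finset.mem_range, Finset.mem_range]
        constructor
        · have : (j:ℝ) ≤ h/A := by
            rw [le_div_iff₀ hA]
            nlinarith
          exact Nat.lt_succ_of_le (Nat.le_floor this)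
        · have : (k:ℝ) ≤ h/B := by
            rw [le_div_iff₀ hB]
            nlinarith
          exact Nat.lt_succ_of_le (Nat.le_floor this)
      · exact hlt
    · rw [Finset.mem_filter]
      rintro ⟨-, hc⟩
      exact lt_irrefl _ hc
  · intro p hp
    rw [Finset.mem_filter] at hp
    obtain ⟨hbox, hpv⟩ := hp
    have hple : A*p.1 + B*p.2 < h := lt_trans hpv hlt
    rw [Finset.mem_filter]
    refine ⟨?_, hple⟩
    rw [Finset.mem_product, Finset.mem_range, Finset.mem_range]
    constructor
    · have : (p.1:ℝ) ≤ h/A := by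
        rw [le_div_iff₀ hA]
        nlinarith [mul_nonneg hB.le (Nat.cast_nonneg (α := ℝ) p.2)]
      exact Nat.lt_succ_of_le (Nat.le_floor this)
    · have : (p.2:ℝ) ≤ h/B := by
        rw [le_div_iff₀ hB]
        nlinarith [mul_nonneg hA.le (Nat.cast_nonneg (α := ℝ) p.1)]
      exact Nat.lt_succ_of_le (Nat.le_floor this)

lemma fcoe_eq_zero (v : 𝓞 K) (h : f (v:K) = 0) : v = 0 := by
  have h4 : (v : K) = 0 := f.injective (by rw [h, map_zero])
  exact_mod_cast h4

lemma gauss_aux (hd : 0 < d) (hθ : θ ^ 2 = -(d : K))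
    (hgen : IntermediateField.adjoin ℚ {θ} = ⊤)
    (A B : ℝ) (hA : 0 < A) (hB : 0 < B) (u₀ z : 𝓞 K) (hz : z ≠ 0) :
    ∀ n : ℕ, ∀ T₁ U₁ T₂ U₂ : 𝓞 K,
      (∃ ξ η : 𝓞 K, T₁ = ξ*u₀ + η*z ∧ U₁ = ξ) → (∃ ξ η : 𝓞 K, T₂ = ξ*u₀ + η*z ∧ U₂ = ξ) →
      Complex.normSq (f ((T₁*U₂ - T₂*U₁ : 𝓞 K) : K)) = Complex.normSq (f (z:K)) →
      cnt A B (A * Complex.normSq (f (T₁:K)) + B * Complex.normSq (f (U₁:K))) ≤ n →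
      ∃ T U : 𝓞 K, (∃ ξ η : 𝓞 K, T = ξ*u₀ + η*z ∧ U = ξ) ∧ ¬(T = 0 ∧ U = 0) ∧
        (1 - (1+(d:ℝ))/4) * (A * Complex.normSq (f (T:K)) + B * Complex.normSq (f (U:K)))^2 ≤
          A * B * Complex.normSq (f (z:K)) := by
  intro n
  induction n using Nat.strong_induction_on with
  | _ n ih =>
  intro T₁ U₁ T₂ U₂ hP1 hP2 hδ hcnt
  set μ : ℝ := (1+(d:ℝ))/4 with hμ
  have hzK : f (z:K) ≠ 0 := by
    intro h0
    exact hz (fcoe_eq_zero z h0)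
  have hnz : 0 < Complex.normSq (f (z:K)) := Complex.normSq_pos.mpr hzK
  set H₁ : ℝ := A * Complex.normSq (f (T₁:K)) + B * Complex.normSq (f (U₁:K)) with hH₁
  have hw₁ : ¬(T₁ = 0 ∧ U₁ = 0) := by
    rintro ⟨rfl, rfl⟩
    rw [show ((0:𝓞 K)*U₂ - T₂*(0:𝓞 K) : 𝓞 K) = 0 by ring] at hδ
    have : ((0 : 𝓞 K) : K) = 0 := by push_cast; ring
    rw [this, map_zero, Complex.normSq_zero] at hδ
    exact lt_irrefl _ (hδ ▸ hnz)
  have hH₁pos : 0 < H₁ := by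
    rcases lt_or_eq_of_le (show 0 ≤ H₁ by
      have := Complex.normSq_nonneg (f (T₁:K))
      have := Complex.normSq_nonneg (f (U₁:K))
      positivity) with h | h
    · exact h
    · exfalso
      have h1 : Complex.normSq (f (T₁:K)) = 0 ∧ Complex.normSq (f (U₁:K)) = 0 := by
        constructor <;>
          nlinarith [Complex.normSq_nonneg (f (T₁:K)), Complex.normSq_nonneg (f (U₁:K))]
      exact hw₁ ⟨fcoe_eq_zero T₁ (Complex.normSq_eq_zero.mp h1.1),
        fcoe_eq_zero U₁ (Complex.normSq_eq_zero.mp h1.2)⟩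
  -- the rounding target
  set β : ℂ := (A * (f (T₂:K) * (starRingEnd ℂ) (f (T₁:K))) +
      B * (f (U₂:K) * (starRingEnd ℂ) (f (U₁:K)))) / ((H₁ : ℝ) : ℂ) with hβ
  obtain ⟨v, hv⟩ := round_lemma hd hθ f β
  have hvβ : Complex.normSq (f (v:K) - β) ≤ μ := by
    rw [← Complex.normSq_neg, neg_sub]
    exact hv
  set T₂' : 𝓞 K := T₂ - v*T₁ with hT₂'
  set U₂' : 𝓞 K := U₂ - v*U₁ with hU₂'
  have hfT : f ((T₂':𝓞 K):K) = f (T₂:K) - f (v:K) * f (T₁:K) := by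
    rw [hT₂']
    push_cast
    rw [map_sub, map_mul]
  have hfU : f ((U₂':𝓞 K):K) = f (U₂:K) - f (v:K) * f (U₁:K) := by
    rw [hU₂']
    push_cast
    rw [map_sub, map_mul]
  set H₂ : ℝ := A * Complex.normSq (f ((T₂':𝓞 K):K)) + B * Complex.normSq (f ((U₂':𝓞 K):K)) with hH₂
  have hid : H₂ = H₁ * Complex.normSq (f (v:K) - β) +
      A * B * Complex.normSq (f (T₁:K) * f (U₂:K) - f (T₂:K) * f (U₁:K)) / H₁ := by
    rw [hH₂, hfT, hfU, hβ]
    exact lagrange A B (f (T₁:K)) (f (U₁:K)) (f (T₂:K)) (f (U₂:K)) (f (v:K)) (ne_of_gt hH₁pos)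
  have hδ' : Complex.normSq (f (T₁:K) * f (U₂:K) - f (T₂:K) * f (U₁:K)) =
      Complex.normSq (f (z:K)) := by
    rw [← hδ]
    congr 1
    push_cast
    rw [map_sub, map_mul, map_mul]
  have hH₂le : H₂ ≤ μ * H₁ + A * B * Complex.normSq (f (z:K)) / H₁ := by
    rw [hid, hδ']
    have h1 : H₁ * Complex.normSq (f (v:K) - β) ≤ H₁ * μ := by
      exact mul_le_mul_of_nonneg_left hvβ (le_of_lt hH₁pos)
    nlinarith
  by_cases hcase : H₂ < H₁
  · -- recurse
    have hP2' : ∃ ξ η : 𝓞 K, T₂' = ξ*u₀ + η*z ∧ U₂' = ξ := by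
      obtain ⟨ξ₁, η₁, hT1, hU1⟩ := hP1
      obtain ⟨ξ₂, η₂, hT2, hU2⟩ := hP2
      exact ⟨ξ₂ - v*ξ₁, η₂ - v*η₁, by rw [hT₂', hT1, hT2]; ring, by rw [hU₂', hU1, hU2]⟩
    have hδ2 : Complex.normSq (f ((T₂'*U₁ - T₁*U₂' : 𝓞 K) : K)) = Complex.normSq (f (z:K)) := by
      have heq : (T₂'*U₁ - T₁*U₂' : 𝓞 K) = -(T₁*U₂ - T₂*U₁) := by
        rw [hT₂', hU₂']; ring
      have hcoe2 : ((-(T₁*U₂ - T₂*U₁) : 𝓞 K) : K) = -(((T₁*U₂ - T₂*U₁ : 𝓞 K)) : K) := by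
        push_cast; ring
      rw [heq, hcoe2, map_neg, Complex.normSq_neg]
      exact hδ
    have hmeas : cnt A B H₂ < cnt A B H₁ := by
      have hj := meas_spec (f := f) hd hθ hgen T₂'
      have hk := meas_spec (f := f) hd hθ hgen U₂'
      have hH₂eq : H₂ = A * (meas f T₂' : ℝ) + B * (meas f U₂' : ℝ) := by
        rw [hH₂, hj, hk]
      rw [hH₂eq]
      apply cnt_lt A B hA hB
      rw [← hH₂eq]
      exact hcase
    have hlt : cnt A B H₂ < n := lt_of_lt_of_le hmeas hcnt
    exact ih (cnt A B H₂) hlt T₂' U₂' T₁ U₁ hP2' hP1 hδ2 le_rfl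
  · -- terminate
    push_neg at hcase
    refine ⟨T₁, U₁, hP1, hw₁, ?_⟩
    have hkey : H₁ ≤ μ * H₁ + A * B * Complex.normSq (f (z:K)) / H₁ := le_trans hcase hH₂le
    rw [← hH₁]
    have h2 : (1 - μ) * H₁ ≤ A * B * Complex.normSq (f (z:K)) / H₁ := by linarith
    rw [le_div_iff₀ hH₁pos] at h2
    calc (1 - μ) * H₁^2 = (1 - μ) * H₁ * H₁ := by ring
    _ ≤ A * B * Complex.normSq (f (z:K)) := h2

lemma gauss (hd : 0 < d) (hθ : θ ^ 2 = -(d : K))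
    (hgen : IntermediateField.adjoin ℚ {θ} = ⊤)
    (A B : ℝ) (hA : 0 < A) (hB : 0 < B) (u₀ z : 𝓞 K) (hz : z ≠ 0) :
    ∃ T U : 𝓞 K, (∃ ξ η : 𝓞 K, T = ξ*u₀ + η*z ∧ U = ξ) ∧ ¬(T = 0 ∧ U = 0) ∧
      (1 - (1+(d:ℝ))/4) * (A * Complex.normSq (f (T:K)) + B * Complex.normSq (f (U:K)))^2 ≤
        A * B * Complex.normSq (f (z:K)) := by
  apply gauss_aux hd hθ hgen A B hA hB u₀ z hz
    (cnt A B (A * Complex.normSq (f (u₀:K)) + B * Complex.normSq (f ((1:𝓞 K):K))))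
    u₀ 1 z 0
  · exact ⟨1, 0, by ring, by ring⟩
  · exact ⟨0, 1, by ring, by ring⟩
  · have heq : (u₀*0 - z*1 : 𝓞 K) = -z := by ring
    rw [heq]
    push_cast
    rw [map_neg, Complex.normSq_neg]
  · exact le_rfl

lemma gauss' (hd : 0 < d) (hθ : θ ^ 2 = -(d : K))
    (hgen : IntermediateField.adjoin ℚ {θ} = ⊤)
    (A B : ℝ) (hA : 0 < A) (hB : 0 < B) (u₀ z : 𝓞 K) (hz : z ≠ 0) :
    ∃ ξ η : 𝓞 K, ¬(ξ*u₀ + η*z = 0 ∧ ξ = 0) ∧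
      (1 - (1+(d:ℝ))/4) * (A * Complex.normSq (f ((ξ*u₀ + η*z : 𝓞 K):K)) +
        B * Complex.normSq (f (ξ:K)))^2 ≤
        A * B * Complex.normSq (f (z:K)) := by
  obtain ⟨T, U, ⟨ξ, η, hT, hU⟩, hTU0, hbound⟩ := gauss (f := f) hd hθ hgen A B hA hB u₀ z hz
  subst hT
  rw [hU] at hTU0 hbound
  exact ⟨ξ, η, hTU0, hbound⟩

end Gauss

section Main

variable {d : ℕ} {θ : K} {f : K →+* ℂ}

lemma compose (hd : 0 < d) (hd2 : d ≤ 2) (hθ : θ ^ 2 = -(d : K))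
    (hgen : IntermediateField.adjoin ℚ {θ} = ⊤)
    (a b c x y z : 𝓞 K) (ha : a ≠ 0) (hb : b ≠ 0) (hz : z ≠ 0)
    (heq : a*x^2 + b*y^2 + c*z^2 = 0)
    (Q₁ Q₂ : 𝓞 K) (hQ : Q₁*y + Q₂*z = 1) :
    ∃ X Y Z : 𝓞 K, ¬(X = 0 ∧ Y = 0 ∧ Z = 0) ∧ a*X^2 + b*Y^2 + c*Z^2 = 0 ∧
      (1 - (1+(d:ℝ))/4) * Complex.normSq (f (Z:K)) ≤
        ‖f (a:K)‖ * ‖f (b:K)‖ := by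
  have hμlt : (1+(d:ℝ))/4 < 1 := by
    have : (d:ℝ) ≤ 2 := by exact_mod_cast hd2
    linarith
  have hμpos : 0 < 1 - (1+(d:ℝ))/4 := by linarith
  have hfa : f (a:K) ≠ 0 := fun h0 => ha (fcoe_eq_zero a h0)
  have hfb : f (b:K) ≠ 0 := fun h0 => hb (fcoe_eq_zero b h0)
  set A : ℝ := ‖f (a:K)‖ with hA
  set B : ℝ := ‖f (b:K)‖ with hB
  have hApos : 0 < A := norm_pos_iff.mpr hfa
  have hBpos : 0 < B := norm_pos_iff.mpr hfb
  -- the congruence data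
  set u₀ : 𝓞 K := x*Q₁ with hu₀
  set t : 𝓞 K := -(x*Q₂) with ht
  have hu₀y : u₀*y = x + z*t := by
    rw [hu₀, ht]
    linear_combination x * hQ
  set w₀ : 𝓞 K := 2*a*x*t + a*z*t^2 - c*z with hw₀def
  have hw₀ : y^2*(a*u₀^2+b) = z*w₀ := by
    rw [hw₀def]
    linear_combination (a*(u₀*y + x + z*t)) * hu₀y + heq
  set k : 𝓞 K := Q₁^2*w₀ + (2*Q₁*Q₂*y + Q₂^2*z)*(a*u₀^2+b) with hkdef
  have hk : z*k = a*u₀^2 + b := by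
    rw [hkdef]
    linear_combination (-(Q₁^2)) * hw₀ + ((a*u₀^2+b)*(Q₁*y + Q₂*z + 1)) * hQ
  -- the small vector
  obtain ⟨ξ, η, hTU0, hbound⟩ := gauss' (f := f) hd hθ hgen A B hApos hBpos u₀ z hz
  set T : 𝓞 K := ξ*u₀ + η*z with hTdef
  set m' : 𝓞 K := ξ^2*k + 2*a*ξ*η*u₀ + a*η^2*z with hm'def
  have hm' : z*m' = a*T^2 + b*ξ^2 := by
    rw [hm'def, hTdef]
    linear_combination (ξ^2) * hk
  by_cases hm'0 : m' = 0
  · -- degenerate case : -ab is a square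
    have hTU : a*T^2 + b*ξ^2 = 0 := by
      rw [← hm', hm'0]
      ring
    have hξ0 : ξ ≠ 0 := by
      intro h0
      apply hTU0
      have hTη : T = η*z := by rw [hTdef, h0]; ring
      have hT0 : a*(η*z)^2 = 0 := by
        rw [← hTη]
        linear_combination hTU - b*ξ*h0
      have hη : η = 0 := by
        rcases mul_eq_zero.mp hT0 with h | h
        · exact absurd h ha
        · have h2 : η*z = 0 := pow_eq_zero_iff (n := 2) (by norm_num) |>.mp h
          rcases mul_eq_zero.mp h2 with h3 | h3
          · exact h3
          · exact absurd h3 hz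
      exact ⟨by rw [hTη, hη]; ring, h0⟩
    have hξK : ((ξ : 𝓞 K) : K) ≠ 0 := by
      intro h0; exact hξ0 (by exact_mod_cast h0)
    set s : K := (a:K)*(T:K)/(ξ:K) with hs
    have hTUK : (a:K)*(T:K)^2 + (b:K)*(ξ:K)^2 = 0 := by
      have := congrArg (fun v : 𝓞 K => (v : K)) hTU
      push_cast at this
      exact this
    have hs2 : s^2 = -((a:K)*(b:K)) := by
      rw [hs]
      field_simp
      linear_combination (a:K) * hTUK
    have hsint : IsIntegral ℤ s := by
      apply IsIntegral.of_pow (n := 2) (by norm_num)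
      have hcoe : -((a:K)*(b:K)) = ((-(a*b) : 𝓞 K) : K) := by push_cast; ring
      rw [hs2, hcoe]
      exact RingOfIntegers.isIntegral_coe _
    set S : 𝓞 K := ⟨s, hsint⟩ with hS
    have hS2 : S^2 = -(a*b) := by
      have h1 : ((S^2 : 𝓞 K) : K) = ((-(a*b) : 𝓞 K) : K) := by
        push_cast
        show s^2 = -((a:K)*(b:K))
        exact hs2
      exact RingOfIntegers.coe_injective h1
    refine ⟨b, S, 0, ?_, ?_, ?_⟩
    · rintro ⟨hb0, -, -⟩
      exact hb hb0
    · linear_combination b * hS2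
    · have h0 : ((0 : 𝓞 K) : K) = 0 := by push_cast; ring
      rw [h0, map_zero, Complex.normSq_zero, mul_zero]
      positivity
  · -- main case
    set st : 𝓞 K := ξ*t + η*y with hstdef
    have hst : z*st = T*y - ξ*x := by
      rw [hstdef, hTdef]
      linear_combination (-ξ) * hu₀y
    set w₁ : 𝓞 K := a*x*st - c*ξ*z with hw₁def
    have hw₁ : y*(a*T*x + b*ξ*y) = z*w₁ := by
      rw [hw₁def]
      linear_combination (-(a*x)) * hst + ξ * heq
    set e : 𝓞 K := Q₁*w₁ + Q₂*(a*T*x + b*ξ*y) with hedef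
    have he : z*e = a*T*x + b*ξ*y := by
      rw [hedef]
      linear_combination (-Q₁) * hw₁ + (a*T*x + b*ξ*y) * hQ
    have hex : e*x + b*st*y = -(c*T*z) := by
      apply mul_left_cancel₀ hz
      linear_combination x*he + b*y*hst + T*heq
    have hey : e*y - a*st*x = -(c*ξ*z) := by
      apply mul_left_cancel₀ hz
      linear_combination y*he - a*x*hst + ξ*heq
    set w₂ : 𝓞 K := e*st - c*T*ξ with hw₂def
    have hyX : y*(e*T + b*st*ξ) = z*w₂ := by
      rw [hw₂def]
      linear_combination (-e) * hst + ξ * hex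
    set X : 𝓞 K := Q₁*w₂ + Q₂*(e*T + b*st*ξ) with hXdef
    have hzX : z*X = e*T + b*st*ξ := by
      rw [hXdef]
      linear_combination (-Q₁) * hyX + (e*T + b*st*ξ) * hQ
    set w₃ : 𝓞 K := -(c*ξ^2 + a*st^2) with hw₃def
    have hyY : y*(e*ξ - a*st*T) = z*w₃ := by
      rw [hw₃def]
      linear_combination (a*st) * hst + ξ * hey
    set Y : 𝓞 K := Q₁*w₃ + Q₂*(e*ξ - a*st*T) with hYdef
    have hzY : z*Y = e*ξ - a*st*T := by
      rw [hYdef]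
      linear_combination (-Q₁) * hyY + (e*ξ - a*st*T) * hQ
    have hz2 : (z^2 : 𝓞 K) ≠ 0 := pow_ne_zero 2 hz
    have hes : e^2 + a*b*st^2 = -(c*z*m') := by
      apply mul_left_cancel₀ hz2
      linear_combination (z*e + a*T*x + b*ξ*y) * he + a*b*(z*st + T*y - ξ*x) * hst +
        c*z^2 * hm' + (a*T^2 + b*ξ^2) * heq
    have heqXY : a*X^2 + b*Y^2 + c*m'^2 = 0 := by
      apply mul_left_cancel₀ hz2
      rw [mul_zero]
      linear_combination a*(z*X + e*T + b*st*ξ) * hzX + b*(z*Y + e*ξ - a*st*T) * hzY +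
        (a*T^2 + b*ξ^2) * hes + c*z*m' * hm'
    refine ⟨X, Y, m', ?_, heqXY, ?_⟩
    · rintro ⟨-, -, h3⟩
      exact hm'0 h3
    · -- the bound
      set H : ℝ := A * Complex.normSq (f (T:K)) + B * Complex.normSq (f (ξ:K)) with hH
      have hHnn : 0 ≤ H := by
        have h1 := Complex.normSq_nonneg (f (T:K))
        have h2 := Complex.normSq_nonneg (f (ξ:K))
        positivity
      have habs : ‖f ((a*T^2 + b*ξ^2 : 𝓞 K) : K)‖ ≤ H := by
        have hcoe : ((a*T^2 + b*ξ^2 : 𝓞 K) : K) = (a:K)*(T:K)^2 + (b:K)*(ξ:K)^2 := by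
          push_cast; ring
        rw [hcoe]
        calc ‖f ((a:K)*(T:K)^2 + (b:K)*(ξ:K)^2)‖
            = ‖f (a:K) * f (T:K)^2 + f (b:K) * f (ξ:K)^2‖ := by
              rw [map_add, map_mul, map_mul, map_pow, map_pow]
        _ ≤ ‖f (a:K) * f (T:K)^2‖ + ‖f (b:K) * f (ξ:K)^2‖ :=
              norm_add_le _ _
        _ = A * ‖f (T:K)‖^2 + B * ‖f (ξ:K)‖^2 := by
              rw [norm_mul, norm_mul, norm_pow, norm_pow]
        _ = H := by rw [hH, Complex.sq_norm, Complex.sq_norm]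
      have hprod : Complex.normSq (f (z:K)) * Complex.normSq (f (m':K)) ≤ H^2 := by
        have h1 : ‖f ((z*m' : 𝓞 K):K)‖ ≤ H := by
          rw [hm']
          exact habs
        have h2 : ‖f ((z*m' : 𝓞 K):K)‖ =
            ‖f (z:K)‖ * ‖f (m':K)‖ := by
          have hcoe : ((z*m' : 𝓞 K) : K) = (z:K)*(m':K) := by push_cast; ring
          rw [hcoe, map_mul, norm_mul]
        have h3 := mul_le_mul h1 h1 (norm_nonneg _) hHnn
        rw [h2] at h3
        calc Complex.normSq (f (z:K)) * Complex.normSq (f (m':K))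
            = (‖f (z:K)‖ * ‖f (m':K)‖) *
              (‖f (z:K)‖ * ‖f (m':K)‖) := by
              rw [← Complex.sq_norm, ← Complex.sq_norm]; ring
        _ ≤ H * H := h3
        _ = H^2 := by ring
      have hnz : 0 < Complex.normSq (f (z:K)) := by
        apply Complex.normSq_pos.mpr
        intro h0
        exact hz (fcoe_eq_zero z h0)
      have hmain : (1 - (1+(d:ℝ))/4) * (Complex.normSq (f (z:K)) *
          Complex.normSq (f (m':K))) ≤ A * B * Complex.normSq (f (z:K)) := by
        calc (1 - (1+(d:ℝ))/4) * (Complex.normSq (f (z:K)) * Complex.normSq (f (m':K)))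
            ≤ (1 - (1+(d:ℝ))/4) * H^2 := by
              apply mul_le_mul_of_nonneg_left hprod (le_of_lt hμpos)
        _ ≤ A * B * Complex.normSq (f (z:K)) := hbound
      rw [hA, hB] at hmain ⊢
      nlinarith [Complex.normSq_nonneg (f (m':K)), hnz, hμpos]

lemma main_aux (hd : 0 < d) (hd2 : d ≤ 2) (hθ : θ ^ 2 = -(d:K))
    (hgen : IntermediateField.adjoin ℚ {θ} = ⊤) :
    ∀ n : ℕ, ∀ a b c x y z : 𝓞 K, meas f a ≤ n →
      ¬(x = 0 ∧ y = 0 ∧ z = 0) → a*x^2 + b*y^2 + c*z^2 = 0 →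
      ∃ X Y Z : 𝓞 K, ¬(X = 0 ∧ Y = 0 ∧ Z = 0) ∧ a*X^2 + b*Y^2 + c*Z^2 = 0 ∧
        (1 - (1+(d:ℝ))/4) * Complex.normSq (f (Z:K)) ≤
          ‖f (a:K)‖ * ‖f (b:K)‖ := by
  intro n
  induction n using Nat.strong_induction_on with
  | _ n ih =>
  intro a b c x y z hn hxyz heq
  have hzero : (1 - (1+(d:ℝ))/4) * Complex.normSq (f (((0:𝓞 K)):K)) ≤
      ‖f (a:K)‖ * ‖f (b:K)‖ := by
    have h0 : ((0 : 𝓞 K) : K) = 0 := by push_cast; ring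
    rw [h0, map_zero, Complex.normSq_zero, mul_zero]
    positivity
  by_cases ha : a = 0
  · refine ⟨1, 0, 0, ?_, ?_, hzero⟩
    · rintro ⟨h1, -, -⟩
      exact one_ne_zero h1
    · rw [ha]; ring
  by_cases hb : b = 0
  · refine ⟨0, 1, 0, ?_, ?_, hzero⟩
    · rintro ⟨-, h1, -⟩
      exact one_ne_zero h1
    · rw [hb]; ring
  by_cases hz0 : z = 0
  · refine ⟨x, y, 0, ?_, ?_, hzero⟩
    · rintro ⟨h1, h2, -⟩
      exact hxyz ⟨h1, h2, hz0⟩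
    · rw [hz0] at heq
      linear_combination heq
  -- primitivise the solution
  obtain ⟨g₁, p₁, q₁, hpq₁, hg₁y, hg₁z⟩ := bezout f hd hd2 hθ hgen y z
  obtain ⟨e, p₂, q₂, hpq₂, hexd, heg₁⟩ := bezout f hd hd2 hθ hgen x g₁
  obtain ⟨x₁, hx₁⟩ := hexd
  obtain ⟨gy, hgy⟩ := hg₁y
  obtain ⟨gz, hgz⟩ := hg₁z
  obtain ⟨e₁, he₁⟩ := heg₁
  have he0 : e ≠ 0 := by
    intro h0
    apply hz0
    rw [hgz, he₁, h0]
    ring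
  set y₁ : 𝓞 K := e₁ * gy with hy₁def
  set z₁ : 𝓞 K := e₁ * gz with hz₁def
  have hy₁ : y = e * y₁ := by rw [hy₁def, hgy, he₁]; ring
  have hz₁ : z = e * z₁ := by rw [hz₁def, hgz, he₁]; ring
  have hz₁0 : z₁ ≠ 0 := by
    intro h0
    exact hz0 (by rw [hz₁, h0]; ring)
  have he2 : (e^2 : 𝓞 K) ≠ 0 := pow_ne_zero 2 he0
  have heq₁ : a*x₁^2 + b*y₁^2 + c*z₁^2 = 0 := by
    apply mul_left_cancel₀ he2
    rw [mul_zero]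
    linear_combination heq - a*(x + e*x₁)*hx₁ - b*(y + e*y₁)*hy₁ - c*(z + e*z₁)*hz₁
  have hbez : p₂*x₁ + (q₂*p₁)*y₁ + (q₂*q₁)*z₁ = 1 := by
    apply mul_left_cancel₀ he0
    rw [mul_one]
    linear_combination hpq₂ + q₂*hpq₁ - p₂*hx₁ - q₂*p₁*hy₁ - q₂*q₁*hz₁
  obtain ⟨g, r₁, r₂, hr, hgy₁, hgz₁⟩ := bezout f hd hd2 hθ hgen y₁ z₁
  by_cases hgu : meas f g = 1
  · -- y₁, z₁ coprime : direct composition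
    obtain ⟨g', hgg'⟩ := unit_of_meas_one hd hθ hgen g hgu
    have hQ : (g'*r₁)*y₁ + (g'*r₂)*z₁ = 1 := by
      linear_combination g'*hr + hgg'
    exact compose (f := f) hd hd2 hθ hgen a b c x₁ y₁ z₁ ha hb hz₁0 heq₁ (g'*r₁) (g'*r₂) hQ
  · -- descent on a
    have hg0 : g ≠ 0 := by
      intro h0
      apply hz₁0
      obtain ⟨w, hw⟩ := hgz₁
      rw [hw, h0]; ring
    have hgm0 : meas f g ≠ 0 := fun h0 => hg0 ((meas_zero_iff hd hθ hgen g).mp h0)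
    have hgm2 : 2 ≤ meas f g := by omega
    obtain ⟨y₂, hy₂⟩ := hgy₁
    obtain ⟨z₂, hz₂⟩ := hgz₁
    have hcop : IsCoprime x₁ g :=
      ⟨p₂, q₂*p₁*y₂ + q₂*q₁*z₂, by linear_combination hbez - q₂*p₁*hy₂ - q₂*q₁*hz₂⟩
    have hdvda : g^2 ∣ a := by
      have hdvd1 : g^2 ∣ a * x₁^2 :=
        ⟨-(b*y₂^2 + c*z₂^2), by linear_combination heq₁ - b*(y₁ + g*y₂)*hy₂ - c*(z₁+g*z₂)*hz₂⟩
      exact (IsCoprime.pow (hcop.symm) (m := 2) (n := 2)).dvd_of_dvd_mul_right hdvd1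
    obtain ⟨a₁, ha₁⟩ := hdvda
    have ha₁0 : a₁ ≠ 0 := by
      intro h0; exact ha (by rw [ha₁, h0]; ring)
    have hmeasa : meas f a = meas f g * (meas f g * meas f a₁) := by
      rw [ha₁, show (g^2*a₁ : 𝓞 K) = g*(g*a₁) by ring,
        meas_mul hd hθ hgen, meas_mul hd hθ hgen]
    have hma₁0 : meas f a₁ ≠ 0 := fun h0 => ha₁0 ((meas_zero_iff hd hθ hgen a₁).mp h0)
    have h4 : meas f a₁ < meas f a := by
      have h1 : 1 ≤ meas f a₁ := Nat.one_le_iff_ne_zero.mpr hma₁0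
      calc meas f a₁ < 2 * (2 * meas f a₁) := by omega
      _ ≤ meas f g * (meas f g * meas f a₁) :=
          Nat.mul_le_mul hgm2 (Nat.mul_le_mul hgm2 le_rfl)
      _ = meas f a := hmeasa.symm
    have heqnew : a₁*(g*x₁)^2 + b*y₁^2 + c*z₁^2 = 0 := by
      linear_combination heq₁ - x₁^2 * ha₁
    have hnt1 : ¬((g*x₁ : 𝓞 K) = 0 ∧ y₁ = 0 ∧ z₁ = 0) := by
      rintro ⟨-, -, h3⟩
      exact hz₁0 h3
    obtain ⟨X, Y, Z, hnt, heq2, hbd⟩ :=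
      ih (meas f a₁) (lt_of_lt_of_le h4 hn) a₁ b c (g*x₁) y₁ z₁ le_rfl hnt1 heqnew
    refine ⟨X, g*Y, g*Z, ?_, ?_, ?_⟩
    · rintro ⟨h1, h2, h3⟩
      apply hnt
      refine ⟨h1, ?_, ?_⟩
      · rcases mul_eq_zero.mp h2 with h | h
        · exact absurd h hg0
        · exact h
      · rcases mul_eq_zero.mp h3 with h | h
        · exact absurd h hg0
        · exact h
    · linear_combination g^2 * heq2 + X^2 * ha₁
    · have hgZcoe : ((g*Z : 𝓞 K):K) = (g:K)*(Z:K) := by push_cast; ring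
      have hacoe : f (a:K) = f (g:K)^2 * f (a₁:K) := by
        rw [ha₁, show ((g^2*a₁ : 𝓞 K):K) = (g:K)^2*(a₁:K) from by push_cast; ring,
          map_mul, map_pow]
      have habsa : ‖f (a:K)‖ =
          Complex.normSq (f (g:K)) * ‖f (a₁:K)‖ := by
        rw [hacoe, norm_mul, norm_pow, Complex.sq_norm]
      calc (1 - (1+(d:ℝ))/4) * Complex.normSq (f ((g*Z : 𝓞 K):K))
          = Complex.normSq (f (g:K)) * ((1 - (1+(d:ℝ))/4) * Complex.normSq (f (Z:K))) := by
            rw [hgZcoe, map_mul, Complex.normSq_mul]; ring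
      _ ≤ Complex.normSq (f (g:K)) * (‖f (a₁:K)‖ * ‖f (b:K)‖) :=
            mul_le_mul_of_nonneg_left hbd (Complex.normSq_nonneg _)
      _ = ‖f (a:K)‖ * ‖f (b:K)‖ := by
            rw [habsa]; ring

end Main

end Holzer9

open NumberField

/-- Hölzer-type theorem of Díaz-Vargas and Vargas de los Santos for `K = ℚ(√-d)` with
`d = 1, 2`: a solvable equation `a·x² + b·y² + c·z² = 0` over `𝓞 K` has a non-trivial
solution `(α₀, β₀, γ₀)` with `|γ₀| ≤ √((4/(3-d))·|ab|)`. -/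
theorem stmt_9 (d : ℕ) (hd : d = 1 ∨ d = 2)
    (K : Type*) [Field K] [NumberField K]
    (θ : K) (hθ : θ ^ 2 = -(d : K)) (hgen : IntermediateField.adjoin ℚ {θ} = ⊤)
    (f : K →+* ℂ) (a b c : 𝓞 K)
    (h : ∃ α β γ : 𝓞 K, ¬(α = 0 ∧ β = 0 ∧ γ = 0) ∧
      a * α ^ 2 + b * β ^ 2 + c * γ ^ 2 = 0) :
    ∃ α₀ β₀ γ₀ : 𝓞 K, ¬(α₀ = 0 ∧ β₀ = 0 ∧ γ₀ = 0) ∧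
      a * α₀ ^ 2 + b * β₀ ^ 2 + c * γ₀ ^ 2 = 0 ∧
      ‖f (γ₀ : K)‖ ≤
        Real.sqrt ((4 / (3 - (d : ℝ))) * ‖f ((a : K) * (b : K))‖) := by
  have hd1 : 0 < d := by rcases hd with h1 | h1 <;> omega
  have hd2 : d ≤ 2 := by rcases hd with h1 | h1 <;> omega
  obtain ⟨α, β, γ, hnt, heq⟩ := h
  obtain ⟨X, Y, Z, hnt', heq', hbd⟩ :=
    Holzer9.main_aux (f := f) hd1 hd2 hθ hgen (Holzer9.meas f a) a b c α β γ le_rfl hnt heq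
  refine ⟨X, Y, Z, hnt', heq', ?_⟩
  have hdR : (0:ℝ) < 3 - (d:ℝ) := by
    have : (d:ℝ) ≤ 2 := by exact_mod_cast hd2
    linarith
  have hμ : (0:ℝ) < 1 - (1+(d:ℝ))/4 := by
    have : (d:ℝ) ≤ 2 := by exact_mod_cast hd2
    linarith
  have habmul : ‖f ((a:K)*(b:K))‖ =
      ‖f (a:K)‖ * ‖f (b:K)‖ := by
    rw [map_mul, norm_mul]
  have hkey : Complex.normSq (f (Z:K)) ≤
      (4/(3-(d:ℝ))) * ‖f ((a:K)*(b:K))‖ := by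
    rw [habmul]
    have h1 : (1 - (1+(d:ℝ))/4) = (3-(d:ℝ))/4 := by ring
    rw [h1] at hbd
    rw [show (4/(3-(d:ℝ))) * (‖f (a:K)‖ * ‖f (b:K)‖)
        = (‖f (a:K)‖ * ‖f (b:K)‖) / ((3-(d:ℝ))/4) from by
      field_simp]
    rw [le_div_iff₀ (by linarith : (0:ℝ) < (3-(d:ℝ))/4)]
    linarith [hbd]
  calc ‖f (Z:K)‖ = Real.sqrt (Complex.normSq (f (Z:K))) := by
        rw [Complex.norm_def]
  _ ≤ Real.sqrt ((4/(3-(d:ℝ))) * ‖f ((a:K)*(b:K))‖) := Real.sqrt_le_sqrt hkey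
end

section
/- Let A, B, w, α₀, β₀ ∈ ℂ with B ≠ 0, |A| ≤ |B|, |w| < |B| − 1, and |α₀|² + |A|·|β₀|² ≤ |w|² + |A|. Then the element t = (α₀² − A·β₀²)/B satisfies |t| ≤ (|α₀|² + |A|·|β₀|²)/|B| and |t| < |B|. -/
/-- The size estimate in the descent step of Legendre's algorithm: under the stated bounds,
`t = (α₀² − A·β₀²)/B` satisfies `|t| ≤ (|α₀|² + |A|·|β₀|²)/|B|` and `|t| < |B|`. -/
theorem stmt_16 (A B w α₀ β₀ : ℂ) (hB : B ≠ 0)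
    (hAB : ‖A‖ ≤ ‖B‖)
    (hw : ‖w‖ < ‖B‖ - 1)
    (hsmall : ‖α₀‖ ^ 2 + ‖A‖ * ‖β₀‖ ^ 2 ≤
      ‖w‖ ^ 2 + ‖A‖) :
    ‖(α₀ ^ 2 - A * β₀ ^ 2) / B‖ ≤
        (‖α₀‖ ^ 2 + ‖A‖ * ‖β₀‖ ^ 2) / ‖B‖ ∧
      ‖(α₀ ^ 2 - A * β₀ ^ 2) / B‖ < ‖B‖ := by
  have hB0 : (0:ℝ) < ‖B‖ := by
    simpa using (norm_pos_iff.mpr hB)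
  have h1 : ‖((α₀ ^ 2 - A * β₀ ^ 2) / B)‖ ≤
      (‖α₀‖ ^ 2 + ‖A‖ * ‖β₀‖ ^ 2) / ‖B‖ := by
    rw [norm_div, div_le_div_iff_of_pos_right hB0]
    calc ‖(α₀ ^ 2 - A * β₀ ^ 2)‖
        ≤ ‖(α₀ ^ 2)‖ + ‖(A * β₀ ^ 2)‖ := by
          exact norm_sub_le _ _
      _ = ‖α₀‖ ^ 2 + ‖A‖ * ‖β₀‖ ^ 2 := by
          simp [map_pow]
  refine ⟨h1, h1.trans_lt ?_⟩
  rw [div_lt_iff₀ hB0]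
  have hw0 : (0:ℝ) ≤ ‖w‖ := norm_nonneg w
  have hB1 : (1:ℝ) < ‖B‖ := by linarith
  have hw2 : ‖w‖ ^ 2 < (‖B‖ - 1) ^ 2 := by
    have := pow_lt_pow_left₀ hw hw0 (n := 2) (by norm_num)
    simpa using this
  nlinarith
end

section
/- Let K be a field, let a, b, c ∈ K with c ≠ 0, and let α₀, β₀, γ₀ ∈ K satisfy a·α₀² + b·β₀² + c·γ₀² = 0. For arbitrary α, β, γ ∈ K, set Q = a·α² + b·β² + c·γ² and P = a·α₀·α + b·β₀·β + c·γ₀·γ, and define x = (α₀·Q − 2·α·P)/c, y = (β₀·Q − 2·β·P)/c, z = (γ₀·Q − 2·γ·P)/c. Then a·x² + b·y² + c·z² = 0. -/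
/-- Correctness of the reduction step in the solution-minimising algorithm: reflecting a
known solution `(α₀, β₀, γ₀)` of `a·x² + b·y² + c·z² = 0` through an arbitrary point
`(α, β, γ)` yields another solution. -/
theorem stmt_17 (K : Type*) [Field K] (a b c : K) (hc : c ≠ 0) (α₀ β₀ γ₀ : K)
    (h₀ : a * α₀ ^ 2 + b * β₀ ^ 2 + c * γ₀ ^ 2 = 0) (α β γ : K) :
    a * ((α₀ * (a * α ^ 2 + b * β ^ 2 + c * γ ^ 2) -
          2 * α * (a * α₀ * α + b * β₀ * β + c * γ₀ * γ)) / c) ^ 2 +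
      b * ((β₀ * (a * α ^ 2 + b * β ^ 2 + c * γ ^ 2) -
          2 * β * (a * α₀ * α + b * β₀ * β + c * γ₀ * γ)) / c) ^ 2 +
      c * ((γ₀ * (a * α ^ 2 + b * β ^ 2 + c * γ ^ 2) -
          2 * γ * (a * α₀ * α + b * β₀ * β + c * γ₀ * γ)) / c) ^ 2 = 0 := by
  field_simp
  linear_combination (a * α ^ 2 + b * β ^ 2 + c * γ ^ 2) ^ 2 * h₀
end
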